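/- In ℝ⁴ with Lorentzian form ℓ(v,v) = 2v₀v₃ − v₁² − v₂² and the affine maps γ_n(v) = λ(n)v + τ(n), where λ(n) fixes the first and second coordinates as λ(n)v = (v₀ + n v₂ + (n²/2) v₃, v₁, v₂ + n v₃, v₃) and τ(n) = (0, n, 0, 0), one has for every v ∈ ℝ⁴ and n ∈ ℤ: ℓ(γ_n(v) − v, γ_n(v) − v) = −n²(1 + v₃²). In particular, for n ≠ 0, γ_n(v) − v is spacelike for all v, so the quotient ℝ⁴/Γ with Γ = {γ_n : n ∈ ℤ} is causal and the action is free. -/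

import Mathlib

/-- The Lorentzian form `ℓ(u,v) = u₀v₃ + u₃v₀ − u₁v₁ − u₂v₂` on `ℝ⁴`. -/
noncomputable def ellForm (u v : Fin 4 → ℝ) : ℝ :=
  u 0 * v 3 + u 3 * v 0 - u 1 * v 1 - u 2 * v 2

/-- The affine transformation `γ_n(v) = λ(n)v + τ(n)` of Example 2.3. -/
noncomputable def gammaEx (n : ℤ) (v : Fin 4 → ℝ) : Fin 4 → ℝ :=
  ![v 0 + (n : ℝ) * v 2 + ((n : ℝ) ^ 2 / 2) * v 3, v 1 + (n : ℝ), v 2 + (n : ℝ) * v 3, v 3]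

/-- Example 2.3, formula (12): for every `v ∈ ℝ⁴` and `n ∈ ℤ`,
`ℓ(γ_n(v) − v, γ_n(v) − v) = −n²(1 + v₃²)`; in particular for `n ≠ 0` the displacement
`γ_n(v) − v` is spacelike and `γ_n(v) ≠ v`, so the action of `Γ = {γ_n}` is free and the
quotient `ℝ⁴/Γ` is causal. -/
theorem example_displacement_spacelike (v : Fin 4 → ℝ) (n : ℤ) :
    ellForm (gammaEx n v - v) (gammaEx n v - v) = -(n : ℝ) ^ 2 * (1 + (v 3) ^ 2) ∧
      (n ≠ 0 →
        ellForm (gammaEx n v - v) (gammaEx n v - v) < 0 ∧ gammaEx n v ≠ v) := by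
  have hform : ellForm (gammaEx n v - v) (gammaEx n v - v)
      = -(n : ℝ) ^ 2 * (1 + (v 3) ^ 2) := by
    simp only [ellForm, gammaEx, Pi.sub_apply]
    norm_num [Matrix.cons_val_zero, Matrix.cons_val_one, Matrix.head_cons, Matrix.cons_val_two, Matrix.cons_val_three, Matrix.tail_cons]
    ring
  refine ⟨hform, fun hn => ?_⟩
  have hn' : (n : ℝ) ≠ 0 := Int.cast_ne_zero.mpr hn
  constructor
  · rw [hform]
    have h1 : (0:ℝ) < (n : ℝ) ^ 2 := by positivity
    nlinarith [sq_nonneg (v 3)]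
  · intro h
    have := congrFun h 1
    simp [gammaEx] at this
    exact hn this
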